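/- OLO-to-policy regret conversion: suppose an OLO strategy guarantees, for any sequence of reward vectors in [−M, M]^A, regret at most 2M·B_T against the best fixed action. If policies π'_t are obtained by running such a strategy at each state–stage pair on the advantage functions A_h^{π'_τ, r'_τ, P'} of the previously played policies, then for every fixed policy π and all T ≥ 1: ∑_{t=1}^T ( V₁^{π, r'_t, P'}(s₁) − V₁^{π'_t, r'_t, P'}(s₁) ) ≤ 2 M H² B_T. -/

import Mathlib

open Finset

variable {S A : Type*}

/-- Auxiliary backward value recursion: `valAux P r π k h s` is the value at stage `h`,
state `s`, with `k` stages remaining (including `h`). -/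
noncomputable def valAux [Fintype S] [Fintype A] (P : ℕ → S → A → S → ℝ)
    (r : ℕ → S → A → ℝ) (π : ℕ → S → A → ℝ) : ℕ → ℕ → S → ℝ
  | 0, _, _ => 0
  | k + 1, h, s => ∑ a, π h s a *
      (r h s a + ∑ s', P h s a s' * valAux P r π k (h + 1) s')

/-- Value function `V_h^{π,r,P}(s)` in an `H`-horizon MDP (stages `1,…,H`). -/
noncomputable def Val [Fintype S] [Fintype A] (H : ℕ) (P : ℕ → S → A → S → ℝ)
    (r : ℕ → S → A → ℝ) (π : ℕ → S → A → ℝ) (h : ℕ) (s : S) : ℝ :=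
  valAux P r π (H + 1 - h) h s

/-- Q-value function `Q_h^{π,r,P}(s,a)`; satisfies Bellman's equation, with
`Val H P r π (H+1) = 0`, so `Q_H = r_H`. -/
noncomputable def Qval [Fintype S] [Fintype A] (H : ℕ) (P : ℕ → S → A → S → ℝ)
    (r : ℕ → S → A → ℝ) (π : ℕ → S → A → ℝ) (h : ℕ) (s : S) (a : A) : ℝ :=
  r h s a + ∑ s', P h s a s' * Val H P r π (h + 1) s'

/-- State distribution `μ_h^{π,P,s₁}` at stage `h` induced by policy `π` and kernels `P`
from initial state `s₁`. -/
noncomputable def occup [Fintype S] [Fintype A] [DecidableEq S]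
    (P : ℕ → S → A → S → ℝ) (π : ℕ → S → A → ℝ) (s₁ : S) : ℕ → S → ℝ
  | 0, _ => 0
  | 1, s => if s = s₁ then 1 else 0
  | h + 2, s' => ∑ s, ∑ a, occup P π s₁ (h + 1) s * π (h + 1) s a * P (h + 1) s a s'

section AuxLemmas
variable [Fintype S] [Fintype A]

lemma valAux_bounds (P : ℕ → S → A → S → ℝ) (r : ℕ → S → A → ℝ) (π : ℕ → S → A → ℝ)
    (M : ℝ) (hM : 0 ≤ M)
    (hP0 : ∀ h s a s', 0 ≤ P h s a s') (hP1 : ∀ h s a, ∑ s', P h s a s' = 1)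
    (hr : ∀ h s a, r h s a ∈ Set.Icc 0 M)
    (hπ0 : ∀ h s a, 0 ≤ π h s a) (hπ1 : ∀ h s, ∑ a, π h s a = 1) :
    ∀ k h s, 0 ≤ valAux P r π k h s ∧ valAux P r π k h s ≤ k * M := by
  intro k
  induction k with
  | zero => intro h s; simp [valAux]
  | succ k ih =>
    intro h s
    constructor
    · apply Finset.sum_nonneg; intro a _
      apply mul_nonneg (hπ0 _ _ _)
      have h1 := (hr h s a).1
      have h2 : 0 ≤ ∑ s', P h s a s' * valAux P r π k (h+1) s' :=
        Finset.sum_nonneg fun s' _ => mul_nonneg (hP0 _ _ _ _) (ih (h+1) s').1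
      linarith
    · have key : ∀ a, r h s a + ∑ s', P h s a s' * valAux P r π k (h+1) s'
          ≤ (k+1 : ℕ) * M := by
        intro a
        have h2 : ∑ s', P h s a s' * valAux P r π k (h+1) s'
            ≤ ∑ s', P h s a s' * (k * M) := by
          apply Finset.sum_le_sum; intro s' _
          exact mul_le_mul_of_nonneg_left (ih (h+1) s').2 (hP0 _ _ _ _)
        rw [← Finset.sum_mul, hP1, one_mul] at h2
        have h3 := (hr h s a).2
        push_cast
        linarith
      calc valAux P r π (k+1) h s = ∑ a, π h s a *
            (r h s a + ∑ s', P h s a s' * valAux P r π k (h + 1) s') := rfl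
        _ ≤ ∑ a, π h s a * ((k+1 : ℕ) * M) := by
            apply Finset.sum_le_sum; intro a _
            exact mul_le_mul_of_nonneg_left (key a) (hπ0 _ _ _)
        _ = (k+1 : ℕ) * M := by rw [← Finset.sum_mul, hπ1, one_mul]

lemma occup_nonneg [DecidableEq S] (P : ℕ → S → A → S → ℝ) (π : ℕ → S → A → ℝ) (s₁ : S)
    (hP0 : ∀ h s a s', 0 ≤ P h s a s') (hπ0 : ∀ h s a, 0 ≤ π h s a) (h : ℕ) :
    ∀ s, 0 ≤ occup P π s₁ h s := by
  induction h with
  | zero => intro s; simp [occup]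
  | succ n ih =>
    cases n with
    | zero => intro s; simp only [occup]; split <;> norm_num
    | succ m =>
      intro s'
      apply Finset.sum_nonneg; intro s _
      apply Finset.sum_nonneg; intro a _
      exact mul_nonneg (mul_nonneg (ih s) (hπ0 _ _ _)) (hP0 _ _ _ _)

lemma occup_sum [DecidableEq S] (P : ℕ → S → A → S → ℝ) (π : ℕ → S → A → ℝ) (s₁ : S)
    (hP1 : ∀ h s a, ∑ s', P h s a s' = 1) (hπ1 : ∀ h s, ∑ a, π h s a = 1) (h : ℕ)
    (hh : 1 ≤ h) : ∑ s, occup P π s₁ h s = 1 := by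
  induction h with
  | zero => omega
  | succ n ih =>
    cases n with
    | zero => simp [occup]
    | succ m =>
      have key : ∀ s' : S, occup P π s₁ (m+1+1) s'
          = ∑ s, ∑ a, occup P π s₁ (m+1) s * π (m+1) s a * P (m+1) s a s' := fun _ => rfl
      calc ∑ s', occup P π s₁ (m+1+1) s'
          = ∑ s, ∑ a, occup P π s₁ (m+1) s * π (m+1) s a * (∑ s', P (m+1) s a s') := by
            simp only [key, Finset.mul_sum]
            rw [Finset.sum_comm]
            exact Finset.sum_congr rfl fun s _ => Finset.sum_comm
        _ = 1 := by
            simp only [hP1, mul_one, ← Finset.mul_sum, hπ1]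
            exact ih (by omega)

lemma occup_step [DecidableEq S] (P : ℕ → S → A → S → ℝ) (π : ℕ → S → A → ℝ) (s₁ : S)
    (h : ℕ) (hh : 1 ≤ h) (g : S → ℝ) :
    ∑ s', occup P π s₁ (h+1) s' * g s'
      = ∑ s, occup P π s₁ h s * ∑ a, π h s a * ∑ s', P h s a s' * g s' := by
  obtain ⟨m, rfl⟩ : ∃ m, h = m + 1 := ⟨h - 1, by omega⟩
  have key : ∀ s' : S, occup P π s₁ (m+1+1) s'
      = ∑ s, ∑ a, occup P π s₁ (m+1) s * π (m+1) s a * P (m+1) s a s' := fun _ => rfl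
  simp only [key, Finset.sum_mul, Finset.mul_sum]
  rw [Finset.sum_comm]
  exact Finset.sum_congr rfl fun s _ => by
    rw [Finset.sum_comm]
    exact Finset.sum_congr rfl fun a _ => Finset.sum_congr rfl fun s' _ => by ring

lemma val_decomp [DecidableEq S] (P : ℕ → S → A → S → ℝ) (r : ℕ → S → A → ℝ)
    (π : ℕ → S → A → ℝ) (s₁ : S) :
    ∀ k h, 1 ≤ h → ∑ s, occup P π s₁ h s * valAux P r π k h s
      = ∑ j ∈ Finset.Ico h (h+k), ∑ s, occup P π s₁ j s * ∑ a, π j s a * r j s a := by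
  intro k
  induction k with
  | zero => intro h _; simp [valAux]
  | succ k ih =>
    intro h hh
    have unfold1 : ∀ s : S, valAux P r π (k+1) h s = ∑ a, π h s a *
        (r h s a + ∑ s', P h s a s' * valAux P r π k (h + 1) s') := fun _ => rfl
    have lhs : ∑ s, occup P π s₁ h s * valAux P r π (k+1) h s
        = (∑ s, occup P π s₁ h s * ∑ a, π h s a * r h s a)
          + ∑ s, occup P π s₁ h s * ∑ a, π h s a *
              ∑ s', P h s a s' * valAux P r π k (h+1) s' := by
      rw [← Finset.sum_add_distrib]
      apply Finset.sum_congr rfl; intro s _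
      rw [unfold1, ← mul_add, ← Finset.sum_add_distrib]
      congr 1; apply Finset.sum_congr rfl; intro a _; ring
    rw [lhs, ← occup_step P π s₁ h hh, ih (h+1) (by omega),
      show h + (k+1) = (h+1) + k by omega,
      ← Finset.sum_Ico_consecutive _ (by omega : h ≤ h+1) (by omega : h+1 ≤ h+1+k),
      Finset.sum_Ico_eq_sum_range]
    simp

lemma val_eq_sum_q (H : ℕ) (P : ℕ → S → A → S → ℝ) (r : ℕ → S → A → ℝ)
    (π : ℕ → S → A → ℝ) (h : ℕ) (hh : h ≤ H) (s : S) :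
    Val H P r π h s = ∑ a, π h s a * Qval H P r π h s a := by
  have e1 : H + 1 - h = (H - h) + 1 := by omega
  have e2 : H + 1 - (h+1) = H - h := by omega
  simp only [Val, Qval, e1, e2, valAux]

lemma val_top (H : ℕ) (P : ℕ → S → A → S → ℝ) (r : ℕ → S → A → ℝ)
    (π : ℕ → S → A → ℝ) (s : S) : Val H P r π (H+1) s = 0 := by
  simp [Val, Nat.sub_self, valAux]

lemma telescope_aux (u : ℕ → ℝ) (H : ℕ) :
    ∑ j ∈ Finset.Icc 1 H, (u (j+1) - u j) = u (H+1) - u 1 := by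
  rw [← Finset.Ico_add_one_right_eq_Icc, Finset.sum_Ico_eq_sum_range]
  simp only [Nat.add_sub_cancel]
  calc ∑ i ∈ Finset.range H, (u (1 + i + 1) - u (1 + i))
      = ∑ i ∈ Finset.range H, ((fun i => u (i+1)) (i+1) - (fun i => u (i+1)) i) := by
        apply Finset.sum_congr rfl; intro i _
        simp [Nat.add_comm 1 i]
    _ = u (H+1) - u 1 := Finset.sum_range_sub (fun i => u (i+1)) H

lemma pdl [DecidableEq S] (H : ℕ) (P : ℕ → S → A → S → ℝ) (r : ℕ → S → A → ℝ)
    (π πh : ℕ → S → A → ℝ) (s₁ : S) :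
    Val H P r π 1 s₁ - Val H P r πh 1 s₁ =
      ∑ j ∈ Finset.Icc 1 H, ∑ s, occup P π s₁ j s *
        (∑ a, π j s a * Qval H P r πh j s a - Val H P r πh j s) := by
  have e : ∀ s : S, occup P π s₁ 1 s = if s = s₁ then 1 else 0 := fun _ => rfl
  have step : ∀ j, 1 ≤ j →
      ∑ s, occup P π s₁ j s * (∑ a, π j s a * Qval H P r πh j s a - Val H P r πh j s)
      = ((∑ s, occup P π s₁ j s * ∑ a, π j s a * r j s a)
          + ∑ s', occup P π s₁ (j+1) s' * Val H P r πh (j+1) s')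
        - ∑ s, occup P π s₁ j s * Val H P r πh j s := by
    intro j hj
    rw [occup_step P π s₁ j hj (Val H P r πh (j+1)),
      ← Finset.sum_add_distrib, ← Finset.sum_sub_distrib]
    apply Finset.sum_congr rfl; intro s _
    have expand : ∑ a, π j s a * Qval H P r πh j s a
        = (∑ a, π j s a * r j s a)
          + ∑ a, π j s a * ∑ s', P j s a s' * Val H P r πh (j+1) s' := by
      rw [← Finset.sum_add_distrib]
      apply Finset.sum_congr rfl; intro a _
      simp only [Qval]; ring
    rw [expand]; ring
  have sum_split : ∑ j ∈ Finset.Icc 1 H, ∑ s, occup P π s₁ j s *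
        (∑ a, π j s a * Qval H P r πh j s a - Val H P r πh j s)
      = (∑ j ∈ Finset.Icc 1 H, ∑ s, occup P π s₁ j s * ∑ a, π j s a * r j s a)
        + ∑ j ∈ Finset.Icc 1 H,
            ((fun j => ∑ s, occup P π s₁ j s * Val H P r πh j s) (j+1)
              - (fun j => ∑ s, occup P π s₁ j s * Val H P r πh j s) j) := by
    rw [← Finset.sum_add_distrib]
    apply Finset.sum_congr rfl; intro j hj
    rw [step j (Finset.mem_Icc.mp hj).1]; ring
  rw [sum_split, telescope_aux (fun j => ∑ s, occup P π s₁ j s * Val H P r πh j s) H]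
  have hreward : ∑ j ∈ Finset.Icc 1 H, ∑ s, occup P π s₁ j s * ∑ a, π j s a * r j s a
      = Val H P r π 1 s₁ := by
    have hv := val_decomp P r π s₁ H 1 le_rfl
    rw [← Finset.Ico_add_one_right_eq_Icc, Nat.add_comm H 1, ← hv]
    simp [e, Val, ite_mul]
  have htop : ∑ s, occup P π s₁ (H+1) s * Val H P r πh (H+1) s = 0 := by
    simp [val_top]
  have hone : ∑ s, occup P π s₁ 1 s * Val H P r πh 1 s = Val H P r πh 1 s₁ := by
    simp [e, ite_mul]
  rw [hreward, htop, hone]; ring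

lemma adv_abs_le (H j : ℕ) (hj1 : 1 ≤ j) (hj2 : j ≤ H) (M : ℝ) (hM : 0 ≤ M)
    (P : ℕ → S → A → S → ℝ) (hP0 : ∀ h s a s', 0 ≤ P h s a s')
    (hP1 : ∀ h s a, ∑ s', P h s a s' = 1)
    (r : ℕ → S → A → ℝ) (hr : ∀ h s a, r h s a ∈ Set.Icc 0 M)
    (π : ℕ → S → A → ℝ) (hπ0 : ∀ h s a, 0 ≤ π h s a) (hπ1 : ∀ h s, ∑ a, π h s a = 1)
    (s : S) (a : A) :
    |Qval H P r π j s a - Val H P r π j s| ≤ M * H := by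
  have hb := valAux_bounds P r π M hM hP0 hP1 hr hπ0 hπ1
  have castle : ∀ k : ℕ, k ≤ H → (k : ℝ) * M ≤ M * H := by
    intro k hk
    calc (k : ℝ) * M ≤ (H : ℝ) * M :=
          mul_le_mul_of_nonneg_right (Nat.cast_le.mpr hk) hM
      _ = M * H := mul_comm _ _
  have hV0 : 0 ≤ Val H P r π j s := (hb _ j s).1
  have hV1 : Val H P r π j s ≤ M * H :=
    (hb _ j s).2.trans (castle _ (by omega))
  have hQ0 : 0 ≤ Qval H P r π j s a := by
    have := (hr j s a).1
    have hsum : 0 ≤ ∑ s', P j s a s' * Val H P r π (j+1) s' :=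
      Finset.sum_nonneg fun s' _ => mul_nonneg (hP0 _ _ _ _) (hb _ (j+1) s').1
    simp only [Qval]; linarith
  have hQ1 : Qval H P r π j s a ≤ M * H := by
    have h1 := (hr j s a).2
    have hsum : ∑ s', P j s a s' * Val H P r π (j+1) s'
        ≤ ((H + 1 - (j+1) : ℕ) : ℝ) * M := by
      calc ∑ s', P j s a s' * Val H P r π (j+1) s'
          ≤ ∑ s', P j s a s' * (((H + 1 - (j+1) : ℕ) : ℝ) * M) :=
            Finset.sum_le_sum fun s' _ =>
              mul_le_mul_of_nonneg_left ((hb _ (j+1) s').2) (hP0 _ _ _ _)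
        _ = ((H + 1 - (j+1) : ℕ) : ℝ) * M := by rw [← Finset.sum_mul, hP1, one_mul]
    have h2 : ((H + 1 - (j+1) : ℕ) : ℝ) * M + M ≤ M * H := by
      have e : ((H + 1 - (j+1) : ℕ) : ℝ) = ((H - j : ℕ) : ℝ) := by norm_cast; omega
      rw [e]
      have : ((H - j : ℕ) : ℝ) + 1 ≤ (H : ℝ) := by
        have : (H - j : ℕ) + 1 ≤ H := by omega
        exact_mod_cast this
      nlinarith
    simp only [Qval]; linarith
  rw [abs_le]; constructor <;> linarith

end AuxLemmas

/-- OLO-to-policy regret conversion: if an OLO strategy (given by weights `w`) guarantees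
regret at most 2M'·B against the best fixed action for reward vectors bounded by M', and
the policies π'_t are obtained by running this strategy at each state–stage pair on the
advantage functions of the previously played policies, then for every fixed policy π,
∑_{t=1}^T ( V₁^{π,r'_t,P'}(s₁) − V₁^{π'_t,r'_t,P'}(s₁) ) ≤ 2 M H² B. -/


theorem olo_to_policy [Fintype S] [Fintype A]
    (H T : ℕ) (hH : 1 ≤ H) (M B : ℝ) (hM : 0 < M) (s₁ : S)
    (P' : ℕ → S → A → S → ℝ)
    (hP0 : ∀ h s a s', 0 ≤ P' h s a s') (hP1 : ∀ h s a, ∑ s', P' h s a s' = 1)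
    (r' : ℕ → ℕ → S → A → ℝ) (hr : ∀ t h s a, r' t h s a ∈ Set.Icc 0 M)
    -- the OLO strategy: weights on actions, as a function of the reward sequence
    (w : (ℕ → A → ℝ) → ℕ → A → ℝ)
    (hw0 : ∀ g t a, 0 ≤ w g t a) (hw1 : ∀ g t, ∑ a, w g t a = 1)
    -- the OLO regret guarantee of Definition 1
    (hOLO : ∀ M' : ℝ, 0 < M' → ∀ g : ℕ → A → ℝ,
      (∀ t ∈ Finset.Icc 1 T, ∀ a, |g t a| ≤ M') →
      ∀ a, ∑ t ∈ Finset.Icc 1 T, g t a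
          - ∑ t ∈ Finset.Icc 1 T, ∑ a', w g t a' * g t a' ≤ 2 * M' * B)
    -- the policies are produced by running the strategy on estimated advantages
    (π' : ℕ → ℕ → S → A → ℝ)
    (hπ'def : ∀ t h s a, π' t h s a =
      w (fun τ a' => Qval H P' (r' τ) (π' τ) h s a' - Val H P' (r' τ) (π' τ) h s) t a)
    -- the fixed comparator policy
    (π : ℕ → S → A → ℝ)
    (hπ0 : ∀ h s a, 0 ≤ π h s a) (hπ1 : ∀ h s, ∑ a, π h s a = 1) :
    ∑ t ∈ Finset.Icc 1 T,
        (Val H P' (r' t) π 1 s₁ - Val H P' (r' t) (π' t) 1 s₁)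
      ≤ 2 * M * H ^ 2 * B := by
  classical
  have hMH : (0:ℝ) < M * H := by positivity
  have hπ'0 : ∀ t h s a, 0 ≤ π' t h s a := fun t h s a => (hπ'def t h s a) ▸ hw0 _ _ _
  have hπ'1 : ∀ t h s, ∑ a, π' t h s a = 1 := by
    intro t h s
    simp only [hπ'def]
    exact hw1 _ _
  -- rewrite LHS via the performance-difference lemma and exchange sums
  have main : ∑ t ∈ Finset.Icc 1 T,
        (Val H P' (r' t) π 1 s₁ - Val H P' (r' t) (π' t) 1 s₁)
      = ∑ j ∈ Finset.Icc 1 H, ∑ s, occup P' π s₁ j s *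
          ∑ t ∈ Finset.Icc 1 T,
            (∑ a, π j s a * Qval H P' (r' t) (π' t) j s a
              - Val H P' (r' t) (π' t) j s) := by
    calc ∑ t ∈ Finset.Icc 1 T,
          (Val H P' (r' t) π 1 s₁ - Val H P' (r' t) (π' t) 1 s₁)
        = ∑ t ∈ Finset.Icc 1 T, ∑ j ∈ Finset.Icc 1 H, ∑ s, occup P' π s₁ j s *
            (∑ a, π j s a * Qval H P' (r' t) (π' t) j s a
              - Val H P' (r' t) (π' t) j s) :=
          Finset.sum_congr rfl fun t _ => pdl H P' (r' t) π (π' t) s₁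
      _ = _ := by
          rw [Finset.sum_comm]
          refine Finset.sum_congr rfl fun j _ => ?_
          rw [Finset.sum_comm]
          refine Finset.sum_congr rfl fun s _ => ?_
          rw [Finset.mul_sum]
  rw [main]
  -- bound the inner sums using the OLO guarantee
  have key : ∀ j ∈ Finset.Icc 1 H, ∀ s : S,
      ∑ t ∈ Finset.Icc 1 T,
          (∑ a, π j s a * Qval H P' (r' t) (π' t) j s a
            - Val H P' (r' t) (π' t) j s) ≤ 2 * (M * H) * B := by
    intro j hj s
    obtain ⟨hj1, hj2⟩ := Finset.mem_Icc.mp hj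
    have habs : ∀ t ∈ Finset.Icc 1 T, ∀ a,
        |(fun τ a' => Qval H P' (r' τ) (π' τ) j s a'
            - Val H P' (r' τ) (π' τ) j s) t a| ≤ M * H :=
      fun t _ a => adv_abs_le H j hj1 hj2 M hM.le P' hP0 hP1 (r' t) (hr t)
        (π' t) (hπ'0 t) (hπ'1 t) s a
    have hb2 := hOLO (M * H) hMH
      (fun τ a' => Qval H P' (r' τ) (π' τ) j s a'
        - Val H P' (r' τ) (π' τ) j s) habs
    have hzero : ∀ t, ∑ a', w (fun τ a' => Qval H P' (r' τ) (π' τ) j s a'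
          - Val H P' (r' τ) (π' τ) j s) t a'
        * ((fun τ a' => Qval H P' (r' τ) (π' τ) j s a'
            - Val H P' (r' τ) (π' τ) j s) t a') = 0 := by
      intro t
      have hw : ∀ a', w (fun τ a' => Qval H P' (r' τ) (π' τ) j s a'
          - Val H P' (r' τ) (π' τ) j s) t a' = π' t j s a' :=
        fun a' => (hπ'def t j s a').symm
      simp only [hw]
      have expand : ∑ a', π' t j s a' *
          (Qval H P' (r' t) (π' t) j s a' - Val H P' (r' t) (π' t) j s)
          = (∑ a', π' t j s a' * Qval H P' (r' t) (π' t) j s a')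
            - (∑ a', π' t j s a') * Val H P' (r' t) (π' t) j s := by
        rw [Finset.sum_mul, ← Finset.sum_sub_distrib]
        exact Finset.sum_congr rfl fun a' _ => by ring
      rw [expand, hπ'1, one_mul, ← val_eq_sum_q H P' (r' t) (π' t) j hj2 s, sub_self]
    have hb3 : ∀ a, ∑ t ∈ Finset.Icc 1 T,
        (Qval H P' (r' t) (π' t) j s a - Val H P' (r' t) (π' t) j s)
        ≤ 2 * (M * H) * B := by
      intro a
      have := hb2 a
      rw [Finset.sum_eq_zero (fun t _ => hzero t), sub_zero] at this
      exact this
    have heq : ∀ t, ∑ a, π j s a * Qval H P' (r' t) (π' t) j s a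
          - Val H P' (r' t) (π' t) j s
        = ∑ a, π j s a *
            (Qval H P' (r' t) (π' t) j s a - Val H P' (r' t) (π' t) j s) := by
      intro t
      rw [show ∑ a, π j s a *
            (Qval H P' (r' t) (π' t) j s a - Val H P' (r' t) (π' t) j s)
          = (∑ a, π j s a * Qval H P' (r' t) (π' t) j s a)
            - (∑ a, π j s a) * Val H P' (r' t) (π' t) j s by
        rw [Finset.sum_mul, ← Finset.sum_sub_distrib]
        exact Finset.sum_congr rfl fun a _ => by ring]
      rw [hπ1, one_mul]
    calc ∑ t ∈ Finset.Icc 1 T,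
          (∑ a, π j s a * Qval H P' (r' t) (π' t) j s a
            - Val H P' (r' t) (π' t) j s)
        = ∑ a, π j s a * ∑ t ∈ Finset.Icc 1 T,
            (Qval H P' (r' t) (π' t) j s a - Val H P' (r' t) (π' t) j s) := by
          simp only [heq]
          rw [Finset.sum_comm]
          exact Finset.sum_congr rfl fun a _ => (Finset.mul_sum _ _ _).symm
      _ ≤ ∑ a, π j s a * (2 * (M * H) * B) :=
          Finset.sum_le_sum fun a _ =>
            mul_le_mul_of_nonneg_left (hb3 a) (hπ0 _ _ _)
      _ = 2 * (M * H) * B := by rw [← Finset.sum_mul, hπ1, one_mul]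
  calc ∑ j ∈ Finset.Icc 1 H, ∑ s, occup P' π s₁ j s *
          ∑ t ∈ Finset.Icc 1 T,
            (∑ a, π j s a * Qval H P' (r' t) (π' t) j s a
              - Val H P' (r' t) (π' t) j s)
      ≤ ∑ j ∈ Finset.Icc 1 H, ∑ s, occup P' π s₁ j s * (2 * (M * H) * B) := by
        refine Finset.sum_le_sum fun j hj => Finset.sum_le_sum fun s _ => ?_
        exact mul_le_mul_of_nonneg_left (key j hj s)
          (occup_nonneg P' π s₁ hP0 hπ0 j s)
    _ = ∑ j ∈ Finset.Icc 1 H, 2 * (M * H) * B := by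
        refine Finset.sum_congr rfl fun j hj => ?_
        rw [← Finset.sum_mul,
          occup_sum P' π s₁ hP1 hπ1 j (Finset.mem_Icc.mp hj).1, one_mul]
    _ = 2 * M * H ^ 2 * B := by
        rw [Finset.sum_const, Nat.card_Icc]
        simp only [Nat.add_sub_cancel, nsmul_eq_mul]
        ring
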